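/- Let ρ ∈ (0,1) and let P_ρ be the Bernoulli(ρ) product measure on configurations η ∈ {0,1}^{Z^d}. For any square-integrable function f and any two sites x, y, the L²(P_ρ)-norms of the Glauber derivatives satisfy ‖π_x f‖_{L²} ≤ ‖π_y f‖_{L²} + (1/√(2ρ(1-ρ))) ‖π_{x,y} f‖_{L²}, where π_x f(η) = f(η^x) − f(η) is the Glauber (spin-flip at x) derivative and π_{x,y} f(η) = f(η^{x,y}) − f(η) is the Kawasaki (exchange of values at x and y) derivative. -/

import Mathlib

open MeasureTheory
open scoped ENNReal

/-- `μ` is the Bernoulli(ρ) product measure on `{0,1}^{ℤᵈ}`, characterized by its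
cylinder probabilities. -/
def IsBernoulliProduct {d : ℕ} (ρ : ℝ) (μ : Measure ((Fin d → ℤ) → Bool)) : Prop :=
  IsProbabilityMeasure μ ∧
    ∀ (s : Finset (Fin d → ℤ)) (b : (Fin d → ℤ) → Bool),
      μ {η | ∀ x ∈ s, η x = b x} = ∏ x ∈ s, ENNReal.ofReal (if b x then ρ else 1 - ρ)

/-- The Glauber derivative `π_x f (η) = f(η^x) - f(η)`, where `η^x` flips the value at `x`. -/
def glauberDeriv {d : ℕ} (x : Fin d → ℤ) (f : ((Fin d → ℤ) → Bool) → ℝ) :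
    ((Fin d → ℤ) → Bool) → ℝ :=
  fun η => f (Function.update η x (!η x)) - f η

/-- The exchange `η^{x,y}`: swap the values of `η` at `x` and `y`. -/
def exchange {d : ℕ} (x y : Fin d → ℤ) (η : (Fin d → ℤ) → Bool) : (Fin d → ℤ) → Bool :=
  fun z => if z = x then η y else if z = y then η x else η z

/-- The Kawasaki derivative `π_{x,y} f (η) = f(η^{x,y}) - f(η)`. -/
def kawasakiDeriv {d : ℕ} (x y : Fin d → ℤ) (f : ((Fin d → ℤ) → Bool) → ℝ) :
    ((Fin d → ℤ) → Bool) → ℝ :=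
  fun η => f (exchange x y η) - f η

namespace GKProof


variable {d : ℕ}

abbrev Cfg (d : ℕ) := (Fin d → ℤ) → Bool

def cylSet (s : Finset (Fin d → ℤ)) (b : (Fin d → ℤ) → Bool) : Set (Cfg d) :=
  {η | ∀ x ∈ s, η x = b x}

lemma measurableSet_cylSet (s : Finset (Fin d → ℤ)) (b : (Fin d → ℤ) → Bool) :
    MeasurableSet (cylSet s b) := by
  have h : cylSet s b = ⋂ x ∈ s, (fun η : Cfg d => η x) ⁻¹' {b x} := by
    ext η; simp [cylSet]
  rw [h]
  exact MeasurableSet.biInter s.countable_toSet fun x _ =>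
    (measurable_pi_apply x) (measurableSet_singleton (b x))

def IsProd (p : (Fin d → ℤ) → ℝ) (μ : Measure (Cfg d)) : Prop :=
  IsProbabilityMeasure μ ∧
    ∀ s b, μ (cylSet s b) = ∏ x ∈ s, ENNReal.ofReal (if b x then p x else 1 - p x)

noncomputable def ext' (s : Finset (Fin d → ℤ)) (b : ∀ _ : s, Bool) : (Fin d → ℤ) → Bool :=
  fun x => if h : x ∈ s then b ⟨x, h⟩ else false

lemma cylinder_singleton (s : Finset (Fin d → ℤ)) (b : ∀ _ : s, Bool) :
    cylinder (α := fun _ : Fin d → ℤ => Bool) s {b} = cylSet s (ext' s b) := by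
  ext η
  simp only [cylinder, Set.mem_preimage, Set.mem_singleton_iff, funext_iff, cylSet,
    Set.mem_setOf_eq, Finset.restrict]
  constructor
  · intro h x hx
    simpa [ext', hx] using h ⟨x, hx⟩
  · intro h i
    simpa [ext', i.2] using h i.1 i.2

lemma IsProd.measure_cylinder {p : (Fin d → ℤ) → ℝ} {μ : Measure (Cfg d)} (h : IsProd p μ)
    (s : Finset (Fin d → ℤ)) (T : Set (∀ _ : s, Bool)) :
    μ (cylinder s T) = ∑ b ∈ (Set.toFinite T).toFinset,
      ∏ x ∈ s, ENNReal.ofReal (if ext' s b x then p x else 1 - p x) := by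
  classical
  have hu : cylinder s T = ⋃ b ∈ (Set.toFinite T).toFinset, cylinder (α := fun _ : Fin d → ℤ => Bool) s {b} := by
    ext η
    simp [cylinder, Set.Finite.mem_toFinset]
  rw [hu, measure_biUnion_finset]
  · exact Finset.sum_congr rfl fun b _ => by rw [cylinder_singleton, h.2]
  · intro b hb b' hb' hne
    refine Set.disjoint_left.2 fun η hη hη' => hne ?_
    simp only [cylinder, Set.mem_preimage, Set.mem_singleton_iff] at hη hη'
    rw [← hη, ← hη']
  · intro b _
    rw [cylinder_singleton]
    exact measurableSet_cylSet _ _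

lemma IsProd.unique {p : (Fin d → ℤ) → ℝ} {μ ν : Measure (Cfg d)}
    (hμ : IsProd p μ) (hν : IsProd p ν) : μ = ν := by
  have h1 := hμ.1; have h2 := hν.1
  refine ext_of_generate_finite (measurableCylinders _)
    generateFrom_measurableCylinders.symm isPiSystem_measurableCylinders ?_ (by simp)
  intro t ht
  obtain ⟨s, T, -, rfl⟩ := (mem_measurableCylinders t).1 ht
  rw [hμ.measure_cylinder, hν.measure_cylinder]



def flipAt (y : Fin d → ℤ) (η : Cfg d) : Cfg d := Function.update η y (!η y)

lemma flipAt_apply (y : Fin d → ℤ) (η : Cfg d) (z : Fin d → ℤ) :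
    flipAt y η z = if z = y then !η y else η z := by
  simp [flipAt, Function.update_apply]

lemma measurable_flipAt (y : Fin d → ℤ) : Measurable (flipAt (d := d) y) := by
  apply measurable_pi_lambda
  intro z
  simp only [flipAt_apply]
  by_cases hz : z = y
  · simp only [hz, if_pos rfl]
    exact (measurable_of_countable (fun b : Bool => !b)).comp (measurable_pi_apply (X := fun _ : Fin d → ℤ => Bool) y)
  · simpa [hz] using measurable_pi_apply (X := fun _ : Fin d → ℤ => Bool) z

lemma exchange_apply_swap (x y : Fin d → ℤ) (η : Cfg d) (z : Fin d → ℤ) :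
    exchange x y η z = η (Equiv.swap x y z) := by
  rw [Equiv.swap_apply_def]
  unfold exchange
  split_ifs <;> rfl

lemma measurable_exchange (x y : Fin d → ℤ) : Measurable (exchange (d := d) x y) := by
  apply measurable_pi_lambda
  intro z
  simp only [exchange_apply_swap]
  exact measurable_pi_apply (X := fun _ : Fin d → ℤ => Bool) _

lemma exchange_exchange (x y : Fin d → ℤ) (η : Cfg d) : exchange x y (exchange x y η) = η := by
  funext z
  unfold exchange
  split_ifs with h1 h2 <;> simp_all


lemma isProd_map_exchange (h : IsProd (fun _ => ρ) μ) (x y : Fin d → ℤ) :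
    IsProd (fun _ => ρ) (μ.map (exchange x y)) := by
  haveI := h.1
  have hm := measurable_exchange (d := d) x y
  refine ⟨Measure.isProbabilityMeasure_map hm.aemeasurable, fun s b => ?_⟩
  rw [Measure.map_apply hm (measurableSet_cylSet s b)]
  have hpre : exchange x y ⁻¹' cylSet s b
      = cylSet (s.image (Equiv.swap x y)) (fun w => b (Equiv.swap x y w)) := by
    ext η
    simp only [Set.mem_preimage, cylSet, Set.mem_setOf_eq, Finset.mem_image]
    constructor
    · rintro hh w ⟨z, hz, rfl⟩
      rw [Equiv.swap_apply_self]
      have := hh z hz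
      rwa [exchange_apply_swap] at this
    · intro hh z hz
      rw [exchange_apply_swap]
      have := hh (Equiv.swap x y z) ⟨z, hz, rfl⟩
      rwa [Equiv.swap_apply_self] at this
  rw [hpre, h.2]
  rw [Finset.prod_image (fun a _ a' _ hzz => (Equiv.swap x y).injective hzz)]
  exact Finset.prod_congr rfl fun z _ => by rw [Equiv.swap_apply_self]

lemma isProd_map_flipAt (h : IsProd (fun _ => ρ) μ) (y : Fin d → ℤ) :
    IsProd (Function.update (fun _ => ρ) y (1 - ρ)) (μ.map (flipAt y)) := by
  haveI := h.1
  have hm := measurable_flipAt (d := d) y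
  refine ⟨Measure.isProbabilityMeasure_map hm.aemeasurable, fun s b => ?_⟩
  rw [Measure.map_apply hm (measurableSet_cylSet s b)]
  have hpre : flipAt y ⁻¹' cylSet s b = cylSet s (Function.update b y (!b y)) := by
    ext η
    simp only [Set.mem_preimage, cylSet, Set.mem_setOf_eq]
    refine forall₂_congr fun z hz => ?_
    by_cases hzy : z = y
    · subst hzy
      rw [flipAt_apply, if_pos rfl, Function.update_self]
      cases η z <;> cases b z <;> simp
    · rw [flipAt_apply, if_neg hzy, Function.update_of_ne hzy]
  rw [hpre, h.2]
  refine Finset.prod_congr rfl fun z hz => ?_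
  by_cases hzy : z = y
  · subst hzy
    rw [Function.update_self, Function.update_self]
    cases b z <;> simp [sub_sub_cancel]
  · rw [Function.update_of_ne hzy, Function.update_of_ne hzy]

/-- The density of the `y`-flipped measure w.r.t. `μ`. -/
noncomputable def wD (ρ : ℝ) (y : Fin d → ℤ) : Cfg d → ℝ≥0∞ :=
  fun η => if η y = true then ENNReal.ofReal ((1 - ρ)/ρ) else ENNReal.ofReal (ρ/(1 - ρ))

lemma measurableSet_coord (y : Fin d → ℤ) (c : Bool) :
    MeasurableSet {η : Cfg d | η y = c} :=
  (measurable_pi_apply (X := fun _ : Fin d → ℤ => Bool) y) (measurableSet_singleton c)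

lemma measurable_wD (ρ : ℝ) (y : Fin d → ℤ) : Measurable (wD (d := d) ρ y) :=
  Measurable.ite (measurableSet_coord y true) measurable_const measurable_const

lemma compl_coord (y : Fin d → ℤ) :
    {η : Cfg d | η y = true}ᶜ = {η : Cfg d | η y = false} := by
  ext η; simp

lemma lintegral_ite_bool (C1 C0 : ℝ≥0∞) (y : Fin d → ℤ) (A : Set (Cfg d))
    (hA : MeasurableSet A) (μ : Measure (Cfg d)) :
    ∫⁻ η in A, (if η y = true then C1 else C0) ∂μ
      = C1 * μ ({η | η y = true} ∩ A) + C0 * μ ({η | η y = true}ᶜ ∩ A) := by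
  set S := {η : Cfg d | η y = true} with hSdef
  have hS : MeasurableSet S := measurableSet_coord y true
  have hfun : ∀ η, (if η y = true then C1 else C0)
      = S.indicator (fun _ => C1) η + Sᶜ.indicator (fun _ => C0) η := by
    intro η
    by_cases hη : η y = true <;> simp [hSdef, Set.indicator, hη]
  calc ∫⁻ η in A, (if η y = true then C1 else C0) ∂μ
      = ∫⁻ η in A, (S.indicator (fun _ => C1) η + Sᶜ.indicator (fun _ => C0) η) ∂μ :=
        lintegral_congr hfun
    _ = (∫⁻ η in A, S.indicator (fun _ => C1) η ∂μ)
        + ∫⁻ η in A, Sᶜ.indicator (fun _ => C0) η ∂μ :=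
        lintegral_add_left (measurable_const.indicator hS) _
    _ = C1 * μ (S ∩ A) + C0 * μ (Sᶜ ∩ A) := by
        rw [lintegral_indicator hS, lintegral_indicator hS.compl, setLIntegral_const,
          setLIntegral_const, Measure.restrict_apply hS, Measure.restrict_apply hS.compl]

lemma coord_inter_cylSet {s : Finset (Fin d → ℤ)} {y : Fin d → ℤ} (hy : y ∉ s)
    (b : (Fin d → ℤ) → Bool) (c : Bool) :
    {η : Cfg d | η y = c} ∩ cylSet s b = cylSet (insert y s) (Function.update b y c) := by
  ext η
  simp only [Set.mem_inter_iff, Set.mem_setOf_eq, cylSet, Finset.mem_insert]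
  constructor
  · rintro ⟨h1, h2⟩ z hz
    rcases hz with rfl | hz
    · rwa [Function.update_self]
    · rw [Function.update_of_ne (show z ≠ y by rintro rfl; exact hy hz)]
      exact h2 z hz
  · intro hh
    refine ⟨?_, fun z hz => ?_⟩
    · have := hh y (Or.inl rfl)
      rwa [Function.update_self] at this
    · have := hh z (Or.inr hz)
      rwa [Function.update_of_ne (show z ≠ y by rintro rfl; exact hy hz)] at this


lemma measure_coord (h : IsProd (fun _ => ρ) μ) (y : Fin d → ℤ) (c : Bool) :
    μ {η : Cfg d | η y = c} = ENNReal.ofReal (if c then ρ else 1 - ρ) := by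
  have hset : {η : Cfg d | η y = c} = cylSet {y} (fun _ => c) := by
    ext η; simp [cylSet]
  rw [hset, h.2]; simp

lemma erase_prod_eq (s : Finset (Fin d → ℤ)) (y : Fin d → ℤ) (b : (Fin d → ℤ) → Bool) :
    ∏ z ∈ s.erase y, ENNReal.ofReal
        (if b z then Function.update (fun _ => ρ) y (1 - ρ) z
         else 1 - Function.update (fun _ => ρ) y (1 - ρ) z)
      = ∏ z ∈ s.erase y, ENNReal.ofReal (if b z then ρ else 1 - ρ) :=
  Finset.prod_congr rfl fun z hz => by
    rw [Function.update_of_ne (Finset.ne_of_mem_erase hz)]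

lemma isProd_withDensity (hρ : ρ ∈ Set.Ioo (0:ℝ) 1) (h : IsProd (fun _ => ρ) μ)
    (y : Fin d → ℤ) :
    IsProd (Function.update (fun _ => ρ) y (1 - ρ)) (μ.withDensity (wD ρ y)) := by
  obtain ⟨hρ0, hρ1⟩ := hρ
  have h1ρ : (0:ℝ) < 1 - ρ := by linarith
  have key : ∀ A : Set (Cfg d), MeasurableSet A →
      μ.withDensity (wD ρ y) A
        = ENNReal.ofReal ((1 - ρ)/ρ) * μ ({η | η y = true} ∩ A)
          + ENNReal.ofReal (ρ/(1 - ρ)) * μ ({η | η y = false} ∩ A) := by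
    intro A hA
    rw [withDensity_apply _ hA, ← compl_coord]
    exact lintegral_ite_bool _ _ y A hA μ
  have hmul1 : ENNReal.ofReal ((1 - ρ)/ρ) * ENNReal.ofReal ρ = ENNReal.ofReal (1 - ρ) := by
    rw [← ENNReal.ofReal_mul (by positivity), div_mul_cancel₀ _ (ne_of_gt hρ0)]
  have hmul0 : ENNReal.ofReal (ρ/(1 - ρ)) * ENNReal.ofReal (1 - ρ) = ENNReal.ofReal ρ := by
    rw [← ENNReal.ofReal_mul (by positivity), div_mul_cancel₀ _ (ne_of_gt h1ρ)]
  have hsum : ENNReal.ofReal (1 - ρ) + ENNReal.ofReal ρ = 1 := by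
    rw [← ENNReal.ofReal_add (by linarith) (le_of_lt hρ0)]
    norm_num
  constructor
  · constructor
    rw [key _ MeasurableSet.univ]
    simp only [Set.inter_univ]
    rw [measure_coord h y true, measure_coord h y false]
    simp only [if_true, Bool.false_eq_true, if_false]
    rw [hmul1, hmul0, hsum]
  · intro s b
    rw [key _ (measurableSet_cylSet s b)]
    by_cases hy : y ∈ s
    · have hsub : ∀ c : Bool, b y = c →
          {η : Cfg d | η y = c} ∩ cylSet s b = cylSet s b := fun c hc =>
        Set.inter_eq_self_of_subset_right fun η hη => by
          rw [Set.mem_setOf_eq, hη y hy, hc]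
      have hdisj : ∀ c : Bool, b y ≠ c →
          {η : Cfg d | η y = c} ∩ cylSet s b = ∅ := by
        intro c hc
        ext η
        simp only [Set.mem_inter_iff, Set.mem_setOf_eq, Set.mem_empty_iff_false, iff_false,
          not_and]
        intro h1 h2
        exact hc (by rw [← h2 y hy, h1])
      rw [← Finset.mul_prod_erase s _ hy, erase_prod_eq, Function.update_self]
      cases hb : b y
      · rw [hsub false hb, hdisj true (by simp [hb]), measure_empty, mul_zero, zero_add,
          h.2, ← Finset.mul_prod_erase s _ hy, ← mul_assoc, hb]
        simp only [Bool.false_eq_true, if_false]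
        rw [hmul0, sub_sub_cancel]
      · rw [hsub true hb, hdisj false (by simp [hb]), measure_empty, mul_zero, add_zero,
          h.2, ← Finset.mul_prod_erase s _ hy, ← mul_assoc, hb]
        simp only [if_true]
        rw [hmul1]
    · have hins : ∀ c : Bool, μ ({η : Cfg d | η y = c} ∩ cylSet s b)
          = ENNReal.ofReal (if c then ρ else 1 - ρ)
            * ∏ z ∈ s, ENNReal.ofReal (if b z then ρ else 1 - ρ) := by
        intro c
        rw [coord_inter_cylSet hy b c, h.2, Finset.prod_insert hy, Function.update_self]
        congr 1
        refine Finset.prod_congr rfl fun z hz => ?_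
        rw [Function.update_of_ne (show z ≠ y by rintro rfl; exact hy hz)]
      rw [hins true, hins false]
      simp only [if_true, Bool.false_eq_true, if_false]
      rw [← mul_assoc, ← mul_assoc, hmul1, hmul0, ← add_mul, hsum, one_mul]
      refine Finset.prod_congr rfl fun z hz => ?_
      rw [Function.update_of_ne (show z ≠ y by rintro rfl; exact hy hz)]

lemma map_flipAt_eq_withDensity (hρ : ρ ∈ Set.Ioo (0:ℝ) 1) (h : IsProd (fun _ => ρ) μ)
    (y : Fin d → ℤ) : μ.map (flipAt y) = μ.withDensity (wD ρ y) :=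
  (isProd_map_flipAt h y).unique (isProd_withDensity hρ h y)

section Analytic

def Tmap (x y : Fin d → ℤ) (η : Cfg d) : Cfg d := if η x = η y then η else exchange x y η

def Smap (x y : Fin d → ℤ) (η : Cfg d) : Cfg d := if η x = η y then flipAt y η else η

lemma measurableSet_diag (x y : Fin d → ℤ) : MeasurableSet {η : Cfg d | η x = η y} := by
  have hset : {η : Cfg d | η x = η y}
      = ({η | η x = true} ∩ {η | η y = true}) ∪ ({η | η x = false} ∩ {η | η y = false}) := by
    ext η
    cases hx : η x <;> cases hy : η y <;> simp [hx, hy]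
  rw [hset]
  exact ((measurableSet_coord x true).inter (measurableSet_coord y true)).union
    ((measurableSet_coord x false).inter (measurableSet_coord y false))

lemma measurable_Tmap (x y : Fin d → ℤ) : Measurable (Tmap x y) :=
  Measurable.ite (measurableSet_diag x y) measurable_id (measurable_exchange x y)

lemma measurable_Smap (x y : Fin d → ℤ) : Measurable (Smap x y) :=
  Measurable.ite (measurableSet_diag x y) (measurable_flipAt y) measurable_id

lemma measurePreserving_exchange (h : IsProd (fun _ => ρ) μ) (x y : Fin d → ℤ) :
    MeasurePreserving (exchange x y) μ μ :=
  ⟨measurable_exchange x y, (isProd_map_exchange h x y).unique h⟩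

lemma exchange_mem_diag_iff (x y : Fin d → ℤ) (η : Cfg d) :
    exchange x y η ∈ {η' : Cfg d | η' x = η' y} ↔ η ∈ {η' : Cfg d | η' x = η' y} := by
  by_cases hyx : y = x
  · subst hyx; simp [exchange]
  · simp [exchange, hyx, eq_comm]

lemma measurePreserving_Tmap (h : IsProd (fun _ => ρ) μ) (x y : Fin d → ℤ) :
    MeasurePreserving (Tmap x y) μ μ := by
  have hσ := measurePreserving_exchange h x y
  have hm := measurable_Tmap (d := d) x y
  refine ⟨hm, ?_⟩
  ext C hC
  rw [Measure.map_apply hm hC]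
  set E := {η : Cfg d | η x = η y} with hEdef
  have hEm : MeasurableSet E := measurableSet_diag x y
  have hpre : Tmap x y ⁻¹' C = (C ∩ E) ∪ (exchange x y ⁻¹' (C ∩ Eᶜ)) := by
    ext η
    simp only [Set.mem_preimage, Set.mem_union, Set.mem_inter_iff, Set.mem_compl_iff, Tmap]
    by_cases hη : η x = η y
    · have hηE : η ∈ E := hη
      have h2 := exchange_mem_diag_iff x y η
      rw [if_pos hη]
      simp only [hηE, and_true, ← hEdef] at *
      simp [h2, hηE]
    · have hηE : η ∉ E := hη
      have h2 := exchange_mem_diag_iff x y η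
      rw [if_neg hη]
      simp only [← hEdef] at *
      simp [h2, hηE]
  have hdisj : Disjoint (C ∩ E) (exchange x y ⁻¹' (C ∩ Eᶜ)) := by
    refine Set.disjoint_left.2 ?_
    rintro η ⟨-, hηE⟩ hmem
    rw [Set.mem_preimage] at hmem
    exact hmem.2 ((exchange_mem_diag_iff x y η).2 hηE)
  rw [hpre, measure_union hdisj ((measurable_exchange x y) (hC.inter hEm.compl)),
    hσ.measure_preimage (hC.inter hEm.compl).nullMeasurableSet, ← Set.diff_eq, measure_inter_add_diff C hEm]

lemma glauberDeriv_eq_flip (z : Fin d → ℤ) (g : Cfg d → ℝ) :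
    glauberDeriv z g = fun η => g (flipAt z η) - g η := rfl

lemma glauber_decomp (g : Cfg d → ℝ) (x y : Fin d → ℤ) (η : Cfg d) :
    glauberDeriv x g η
      = glauberDeriv y g (Tmap x y η) + kawasakiDeriv x y g (Smap x y η) := by
  by_cases hη : η x = η y
  · simp only [Tmap, Smap, if_pos hη, glauberDeriv, kawasakiDeriv, flipAt]
    have h1 : exchange x y (Function.update η y (!η y)) = Function.update η x (!η x) := by
      funext z
      simp only [exchange, Function.update_apply]
      split_ifs <;> simp_all
    rw [h1]; ring
  · have hxy : x ≠ y := fun hh => hη (by rw [hh])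
    have hbool : η y = !η x := by
      cases hx : η x <;> cases hy : η y <;> simp_all
    simp only [Tmap, Smap, if_neg hη, glauberDeriv, kawasakiDeriv, flipAt]
    have h1 : Function.update (exchange x y η) y (!exchange x y η y)
        = Function.update η x (!η x) := by
      funext z
      simp only [exchange, Function.update_apply]
      split_ifs <;> simp_all
    rw [h1]; ring

end Analytic

lemma kawasaki_symm (g : Cfg d → ℝ) (x y : Fin d → ℤ) (η : Cfg d) :
    kawasakiDeriv x y g (exchange x y η) = - kawasakiDeriv x y g η := by
  simp only [kawasakiDeriv, exchange_exchange]
  ring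

lemma key_bound {x y : Fin d → ℤ} (hρ : ρ ∈ Set.Ioo (0:ℝ) 1) (h : IsProd (fun _ => ρ) μ)
    (hxy : x ≠ y) {g : Cfg d → ℝ} (hg : Measurable g) :
    eLpNorm (fun η => kawasakiDeriv x y g (Smap x y η)) 2 μ
      ≤ ENNReal.ofReal (1 / Real.sqrt (2 * (ρ * (1 - ρ))))
        * eLpNorm (kawasakiDeriv x y g) 2 μ := by
  obtain ⟨hρ0, hρ1⟩ := hρ
  have h1ρ : (0:ℝ) < 1 - ρ := by linarith
  have hχ : (0:ℝ) < ρ * (1 - ρ) := by positivity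
  set k := kawasakiDeriv x y g with hk
  have hkm : Measurable k := (hg.comp (measurable_exchange x y)).sub hg
  set G : Cfg d → ℝ≥0∞ := fun η => (‖k η‖₊ : ℝ≥0∞) ^ (2:ℝ) with hG
  have hGm : Measurable G := ENNReal.continuous_rpow_const.measurable.comp hkm.nnnorm.coe_nnreal_ennreal
  have hGσ : ∀ η, G (exchange x y η) = G η := by
    intro η
    have hkσ : k (exchange x y η) = - k η := kawasaki_symm g x y η
    simp [hG, hkσ]
  set E := {η : Cfg d | η x = η y} with hEdef
  have hEm : MeasurableSet E := measurableSet_diag x y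
  set A1 := Eᶜ ∩ {η : Cfg d | η y = true} with hA1
  set A0 := Eᶜ ∩ {η : Cfg d | η y = false} with hA0
  have hA1m : MeasurableSet A1 := hEm.compl.inter (measurableSet_coord y true)
  have hA0m : MeasurableSet A0 := hEm.compl.inter (measurableSet_coord y false)
  set c1 := ENNReal.ofReal ((1 - ρ)/ρ) with hc1
  set c0 := ENNReal.ofReal (ρ/(1 - ρ)) with hc0
  -- flipping at y exchanges E and Eᶜ
  have hflipE : ∀ η : Cfg d, flipAt y η ∈ Eᶜ ↔ η ∈ E := by
    intro η
    cases hx : η x <;> cases hy : η y <;>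
      simp [hEdef, flipAt_apply, hxy, hx, hy]
  -- pointwise description of `G ∘ Smap`
  have hptwise : ∀ η, G (Smap x y η)
      = E.indicator (fun η' => G (flipAt y η')) η + Eᶜ.indicator G η := by
    intro η
    by_cases hη : η x = η y
    · have hηE : η ∈ E := hη
      rw [Smap, if_pos hη, Set.indicator_of_mem hηE,
        Set.indicator_of_notMem (Set.notMem_compl_iff.2 hηE), add_zero]
    · have hηE : η ∉ E := hη
      rw [Smap, if_neg hη, Set.indicator_of_notMem hηE,
        Set.indicator_of_mem (Set.mem_compl hηE), zero_add]
  -- the first indicator equals an indicator composed with the flip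
  have hind : (fun η => E.indicator (fun η' => G (flipAt y η')) η)
      = fun η => (Eᶜ.indicator G) (flipAt y η) := by
    funext η
    by_cases hη : η ∈ E
    · rw [Set.indicator_of_mem hη, Set.indicator_of_mem ((hflipE η).2 hη)]
    · rw [Set.indicator_of_notMem hη,
        Set.indicator_of_notMem (fun hc => hη ((hflipE η).1 hc))]
  have hpiece1 : ∫⁻ η, E.indicator (fun η' => G (flipAt y η')) η ∂μ
      = ∫⁻ η, (Eᶜ.indicator G) η * wD ρ y η ∂μ := by
    rw [hind, ← lintegral_map (hGm.indicator hEm.compl) (measurable_flipAt y),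
      map_flipAt_eq_withDensity ⟨hρ0, hρ1⟩ h y,
      lintegral_withDensity_eq_lintegral_mul μ (measurable_wD ρ y)
        (hGm.indicator hEm.compl)]
    exact lintegral_congr fun η => mul_comm _ _
  -- split according to the value at `y`
  have hsplit : ∀ η, (Eᶜ.indicator G) η * wD ρ y η + Eᶜ.indicator G η
      = (c1 + 1) * A1.indicator G η + (c0 + 1) * A0.indicator G η := by
    intro η
    by_cases hη : η ∈ Eᶜ
    · by_cases hy1 : η y = true
      · have hm1 : η ∈ A1 := ⟨hη, hy1⟩
        have hm0 : η ∉ A0 := by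
          rintro ⟨-, hf⟩
          simp only [Set.mem_setOf_eq] at hf
          simp [hy1] at hf
        rw [Set.indicator_of_mem hη, Set.indicator_of_mem hm1, Set.indicator_of_notMem hm0,
          mul_zero, add_zero, wD, if_pos hy1, ← hc1]
        ring
      · have hy0 : η y = false := by cases hyv : η y <;> simp_all
        have hm0 : η ∈ A0 := ⟨hη, hy0⟩
        have hm1 : η ∉ A1 := by
          rintro ⟨-, hf⟩
          simp only [Set.mem_setOf_eq] at hf
          exact hy1 hf
        rw [Set.indicator_of_mem hη, Set.indicator_of_mem hm0, Set.indicator_of_notMem hm1,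
          mul_zero, zero_add, wD, if_neg hy1, ← hc0]
        ring
    · have hm1 : η ∉ A1 := fun hc => hη hc.1
      have hm0 : η ∉ A0 := fun hc => hη hc.1
      rw [Set.indicator_of_notMem hη, Set.indicator_of_notMem hm1,
        Set.indicator_of_notMem hm0, zero_mul, add_zero, mul_zero, mul_zero, add_zero]
  -- symmetry : the integrals over A1 and A0 agree
  have hswapmem : ∀ η : Cfg d, exchange x y η ∈ A1 ↔ η ∈ A0 := by
    intro η
    have e1 : exchange x y η y = η x := by simp [exchange, Ne.symm hxy]
    have e0 : exchange x y η x = η y := by simp [exchange]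
    simp only [hA1, hA0, Set.mem_inter_iff, Set.mem_compl_iff, exchange_mem_diag_iff,
      Set.mem_setOf_eq, e1, e0, hEdef]
    cases hx : η x <;> cases hy : η y <;> simp [hx, hy]
  have hswap : ∀ η : Cfg d, A1.indicator G (exchange x y η) = A0.indicator G η := by
    intro η
    by_cases hη : η ∈ A0
    · rw [Set.indicator_of_mem ((hswapmem η).2 hη), Set.indicator_of_mem hη, hGσ]
    · rw [Set.indicator_of_notMem (fun hc => hη ((hswapmem η).1 hc)),
        Set.indicator_of_notMem hη]
  have hJ : ∫⁻ η, A1.indicator G η ∂μ = ∫⁻ η, A0.indicator G η ∂μ := by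
    have hmp := measurePreserving_exchange h x y
    calc ∫⁻ η, A1.indicator G η ∂μ
        = ∫⁻ η, A1.indicator G (exchange x y η) ∂μ := by
          rw [← lintegral_map (hGm.indicator hA1m) (measurable_exchange x y), hmp.map_eq]
      _ = ∫⁻ η, A0.indicator G η ∂μ := lintegral_congr hswap
  -- the total integral of `G ∘ Smap`
  have htot : ∫⁻ η, G (Smap x y η) ∂μ
      = (c1 + 1 + (c0 + 1)) * ∫⁻ η, A0.indicator G η ∂μ := by
    calc ∫⁻ η, G (Smap x y η) ∂μ
        = ∫⁻ η, (E.indicator (fun η' => G (flipAt y η')) η + Eᶜ.indicator G η) ∂μ :=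
          lintegral_congr hptwise
      _ = (∫⁻ η, E.indicator (fun η' => G (flipAt y η')) η ∂μ)
          + ∫⁻ η, Eᶜ.indicator G η ∂μ :=
          lintegral_add_left ((hGm.comp (measurable_flipAt y)).indicator hEm) _
      _ = ∫⁻ η, ((Eᶜ.indicator G) η * wD ρ y η + Eᶜ.indicator G η) ∂μ := by
          rw [hpiece1, ← lintegral_add_left (f := fun η => (Eᶜ.indicator G) η * wD ρ y η) ((hGm.indicator hEm.compl).mul (measurable_wD ρ y))]
      _ = ∫⁻ η, ((c1 + 1) * A1.indicator G η + (c0 + 1) * A0.indicator G η) ∂μ :=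
          lintegral_congr hsplit
      _ = (c1 + 1) * (∫⁻ η, A1.indicator G η ∂μ)
          + (c0 + 1) * ∫⁻ η, A0.indicator G η ∂μ := by
          rw [lintegral_add_left (((hGm.indicator hA1m)).const_mul _),
            lintegral_const_mul _ (hGm.indicator hA1m),
            lintegral_const_mul _ (hGm.indicator hA0m)]
      _ = (c1 + 1 + (c0 + 1)) * ∫⁻ η, A0.indicator G η ∂μ := by
          rw [hJ]; ring
  -- the two halves are at most the full integral
  have hhalf : 2 * (∫⁻ η, A0.indicator G η ∂μ) ≤ ∫⁻ η, G η ∂μ := by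
    have hle : ∀ η, A1.indicator G η + A0.indicator G η ≤ G η := by
      intro η
      by_cases h1 : η ∈ A1
      · have h0 : η ∉ A0 := by
          rintro ⟨-, hf⟩
          rcases h1 with ⟨-, ht⟩
          simp only [Set.mem_setOf_eq] at hf ht
          simp [ht] at hf
        rw [Set.indicator_of_mem h1, Set.indicator_of_notMem h0, add_zero]
      · rw [Set.indicator_of_notMem h1, zero_add]
        by_cases h0 : η ∈ A0
        · rw [Set.indicator_of_mem h0]
        · rw [Set.indicator_of_notMem h0]; exact zero_le
    calc 2 * (∫⁻ η, A0.indicator G η ∂μ)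
        = (∫⁻ η, A1.indicator G η ∂μ) + ∫⁻ η, A0.indicator G η ∂μ := by rw [hJ, two_mul]
      _ = ∫⁻ η, (A1.indicator G η + A0.indicator G η) ∂μ :=
          (lintegral_add_left (hGm.indicator hA1m) _).symm
      _ ≤ ∫⁻ η, G η ∂μ := lintegral_mono hle
  -- constants
  have hconst : c1 + 1 + (c0 + 1) = ENNReal.ofReal (1 / (2 * (ρ * (1 - ρ)))) * 2 := by
    have h2 : (2:ℝ≥0∞) = ENNReal.ofReal 2 := by norm_num
    rw [hc1, hc0, h2, ← ENNReal.ofReal_one, ← ENNReal.ofReal_add (by positivity) (by norm_num),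
      ← ENNReal.ofReal_add (by positivity) (by norm_num),
      ← ENNReal.ofReal_add (by positivity) (by positivity),
      ← ENNReal.ofReal_mul (by positivity)]
    congr 1
    field_simp
    ring
  -- put everything together
  have hmain : ∫⁻ η, G (Smap x y η) ∂μ
      ≤ ENNReal.ofReal (1 / (2 * (ρ * (1 - ρ)))) * ∫⁻ η, G η ∂μ := by
    rw [htot, hconst, mul_assoc]
    exact mul_le_mul_right hhalf _
  -- translate into eLpNorm
  have h2ne : (2:ℝ≥0∞) ≠ 0 := by norm_num
  have h2top : (2:ℝ≥0∞) ≠ ∞ := by norm_num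
  rw [eLpNorm_eq_lintegral_rpow_enorm_toReal h2ne h2top, eLpNorm_eq_lintegral_rpow_enorm_toReal h2ne h2top]
  have htr : (2:ℝ≥0∞).toReal = (2:ℝ) := by norm_num
  rw [htr]
  calc (∫⁻ η, (‖kawasakiDeriv x y g (Smap x y η)‖₊ : ℝ≥0∞) ^ (2:ℝ) ∂μ) ^ (1/(2:ℝ))
      = (∫⁻ η, G (Smap x y η) ∂μ) ^ (1/(2:ℝ)) := rfl
    _ ≤ (ENNReal.ofReal (1 / (2 * (ρ * (1 - ρ)))) * ∫⁻ η, G η ∂μ) ^ (1/(2:ℝ)) :=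
        ENNReal.rpow_le_rpow hmain (by norm_num)
    _ = ENNReal.ofReal (1 / (2 * (ρ * (1 - ρ)))) ^ (1/(2:ℝ)) * (∫⁻ η, G η ∂μ) ^ (1/(2:ℝ)) :=
        ENNReal.mul_rpow_of_nonneg _ _ (by norm_num)
    _ = ENNReal.ofReal (1 / Real.sqrt (2 * (ρ * (1 - ρ))))
        * (∫⁻ η, (‖k η‖₊ : ℝ≥0∞) ^ (2:ℝ) ∂μ) ^ (1/(2:ℝ)) := by
        congr 1
        rw [ENNReal.ofReal_rpow_of_nonneg (by positivity) (by norm_num)]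
        congr 1
        rw [Real.sqrt_eq_rpow, Real.div_rpow zero_le_one (by positivity), Real.one_rpow]

lemma eLpNorm_glauber_congr (hρ : ρ ∈ Set.Ioo (0:ℝ) 1) (h : IsProd (fun _ => ρ) μ)
    {f g : Cfg d → ℝ} (hfg : f =ᵐ[μ] g) (z : Fin d → ℤ) :
    eLpNorm (glauberDeriv z f) 2 μ = eLpNorm (glauberDeriv z g) 2 μ := by
  refine eLpNorm_congr_ae ?_
  have hac : μ.map (flipAt z) ≪ μ := by
    rw [map_flipAt_eq_withDensity hρ h z]
    exact withDensity_absolutelyContinuous μ _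
  have h1 : (fun η => f (flipAt z η)) =ᵐ[μ] fun η => g (flipAt z η) :=
    ae_of_ae_map (measurable_flipAt z).aemeasurable (hfg.filter_mono hac.ae_le)
  filter_upwards [h1, hfg] with η e1 e2
  simp only [flipAt] at e1
  simp only [glauberDeriv, e1, e2]

lemma eLpNorm_kawasaki_congr (h : IsProd (fun _ => ρ) μ) {f g : Cfg d → ℝ}
    (hfg : f =ᵐ[μ] g) (x y : Fin d → ℤ) :
    eLpNorm (kawasakiDeriv x y f) 2 μ = eLpNorm (kawasakiDeriv x y g) 2 μ := by
  refine eLpNorm_congr_ae ?_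
  have hmp := measurePreserving_exchange h x y
  have h1 : (fun η => f (exchange x y η)) =ᵐ[μ] fun η => g (exchange x y η) :=
    ae_of_ae_map (p := fun η => f η = g η) (measurable_exchange x y).aemeasurable
      (by rwa [hmp.map_eq])
  filter_upwards [h1, hfg] with η e1 e2
  simp only [kawasakiDeriv, e1, e2]

end GKProof

set_option maxHeartbeats 1000000 in
open GKProof in
/-- Lemma 2.1 (Glauber meets Kawasaki): for `ρ ∈ (0,1)` and any square-integrable `f`,
`‖π_x f‖_{L²} ≤ ‖π_y f‖_{L²} + (1/√(2ρ(1-ρ))) ‖π_{x,y} f‖_{L²}`. -/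
theorem glauber_exchange_L2_bound {d : ℕ} (ρ : ℝ) (hρ : ρ ∈ Set.Ioo (0 : ℝ) 1)
    (μ : Measure ((Fin d → ℤ) → Bool)) (hμ : IsBernoulliProduct ρ μ)
    (f : ((Fin d → ℤ) → Bool) → ℝ) (hf : MemLp f 2 μ) (x y : Fin d → ℤ) :
    eLpNorm (glauberDeriv x f) 2 μ ≤
      eLpNorm (glauberDeriv y f) 2 μ +
        ENNReal.ofReal (1 / Real.sqrt (2 * (ρ * (1 - ρ)))) * eLpNorm (kawasakiDeriv x y f) 2 μ := by
  have hP : IsProd (fun _ : Fin d → ℤ => ρ) μ := ⟨hμ.1, fun s b => hμ.2 s b⟩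
  by_cases hxy : x = y
  · subst hxy
    exact le_self_add
  obtain ⟨g, hgsm, hfg⟩ := hf.1
  have hgm : Measurable g := hgsm.measurable
  rw [eLpNorm_glauber_congr hρ hP hfg x, eLpNorm_glauber_congr hρ hP hfg y,
    eLpNorm_kawasaki_congr hP hfg x y]
  have hm1 : Measurable (glauberDeriv y g) := (hgm.comp (measurable_flipAt y)).sub hgm
  have hm2 : Measurable (kawasakiDeriv x y g) := (hgm.comp (measurable_exchange x y)).sub hgm
  have hTm := measurable_Tmap (d := d) x y
  have hSm := measurable_Smap (d := d) x y
  have hdecomp : glauberDeriv x g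
      = (glauberDeriv y g ∘ Tmap x y) + (kawasakiDeriv x y g ∘ Smap x y) :=
    funext fun η => glauber_decomp g x y η
  rw [hdecomp]
  have hTnorm : eLpNorm (glauberDeriv y g ∘ Tmap x y) 2 μ
      = eLpNorm (glauberDeriv y g) 2 μ :=
    eLpNorm_comp_measurePreserving hm1.aestronglyMeasurable (measurePreserving_Tmap hP x y)
  have htri : eLpNorm ((glauberDeriv y g ∘ Tmap x y) + (kawasakiDeriv x y g ∘ Smap x y)) 2 μ
      ≤ eLpNorm (glauberDeriv y g ∘ Tmap x y) 2 μ
        + eLpNorm (kawasakiDeriv x y g ∘ Smap x y) 2 μ :=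
    eLpNorm_add_le ((hm1.comp hTm).aestronglyMeasurable)
      ((hm2.comp hSm).aestronglyMeasurable) one_le_two
  have hkb : eLpNorm (kawasakiDeriv x y g ∘ Smap x y) 2 μ
      ≤ ENNReal.ofReal (1 / Real.sqrt (2 * (ρ * (1 - ρ))))
        * eLpNorm (kawasakiDeriv x y g) 2 μ := key_bound hρ hP hxy hgm
  exact le_trans htri (add_le_add hTnorm.le hkb)
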